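/- Let H be a 3-uniform hypergraph with no linear cycle, let T be a linear tree in H, and let v ∈ V(T) be strongly associated to a hyperedge abc of T with v ∉ {a,b,c}. Then v belongs to a hyperedge of T that intersects abc (i.e., v lies in a hyperedge of T neighboring abc). -/
import Mathlib


/-- A linear cycle of length `k ≥ 3` in a 3-uniform hypergraph with edge set `E`:
an alternating cyclic sequence of distinct vertices `v i` and distinct hyperedges `h i`
with `h i ∩ h (i+1) = {v (i+1)}` and non-consecutive hyperedges disjoint. -/
def IsLinearCycle {V : Type*} [DecidableEq V] (E : Finset (Finset V)) (k : ℕ)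
    (v : ZMod k → V) (h : ZMod k → Finset V) : Prop :=
  3 ≤ k ∧ Function.Injective v ∧ Function.Injective h ∧
    (∀ i, h i ∈ E) ∧ (∀ i, h i ∩ h (i + 1) = {v (i + 1)}) ∧
    (∀ i j, i ≠ j → i + 1 ≠ j → j + 1 ≠ i → h i ∩ h j = ∅)

/-- `E` contains a linear cycle. -/
def HasLinearCycle {V : Type*} [DecidableEq V] (E : Finset (Finset V)) : Prop :=
  ∃ (k : ℕ) (v : ZMod k → V) (h : ZMod k → Finset V), IsLinearCycle E k v h

/-- The degree of a vertex: the number of hyperedges containing it. -/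
def hDegree {V : Type*} [DecidableEq V] (E : Finset (Finset V)) (v : V) : ℕ :=
  (E.filter (fun e => v ∈ e)).card

/-- The support of a vertex `v` in a hyperedge `h`: the pairs of `h` that form a
hyperedge together with `v`. -/
def hSupport {V : Type*} [DecidableEq V] (E : Finset (Finset V)) (h : Finset V) (v : V) :
    Finset (Finset V) :=
  (h.powersetCard 2).filter (fun p => insert v p ∈ E)

/-- A pair of vertices is thick if at least two hyperedges contain it. -/
def ThickPair {V : Type*} [DecidableEq V] (E : Finset (Finset V)) (a b : V) : Prop :=
  2 ≤ (E.filter (fun e => a ∈ e ∧ b ∈ e)).card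

/-- A hyperedge is thick if each of its pairs is contained in at least two hyperedges. -/
def ThickEdge {V : Type*} [DecidableEq V] (E : Finset (Finset V)) (h : Finset V) : Prop :=
  ∀ p ∈ h.powersetCard 2, 2 ≤ (E.filter (fun e => p ⊆ e)).card

/-- `v ∉ h` is strongly associated to the hyperedge `h` if at least two of the 3-sets
formed by `v` and a pair of `h` are hyperedges. -/
def StronglyAssoc {V : Type*} [DecidableEq V] (E : Finset (Finset V)) (h : Finset V) (v : V) :
    Prop :=
  v ∉ h ∧ 2 ≤ (hSupport E h v).card

/-- A linear path of length `k` (given by its sequence of hyperedges): consecutive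
hyperedges meet in exactly one vertex, non-consecutive ones are disjoint. -/
def IsLinearPath {V : Type*} [DecidableEq V] (E : Finset (Finset V)) (k : ℕ)
    (h : Fin k → Finset V) : Prop :=
  Function.Injective h ∧ (∀ i, h i ∈ E) ∧
    (∀ i j : Fin k, (i : ℕ) + 1 = (j : ℕ) → (h i ∩ h j).card = 1) ∧
    (∀ i j : Fin k, (i : ℕ) + 2 ≤ (j : ℕ) → h i ∩ h j = ∅)

/-- A linear tree with vertex set `S` and edge set `T`: built from a single vertex by
repeatedly adding hyperedges meeting the current vertex set in exactly one vertex. -/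
inductive IsLinearTree {V : Type*} [DecidableEq V] : Finset V → Finset (Finset V) → Prop
  | single (v : V) : IsLinearTree {v} ∅
  | extend {S : Finset V} {T : Finset (Finset V)} (e : Finset V) :
      IsLinearTree S T → e.card = 3 → (e ∩ S).card = 1 → IsLinearTree (S ∪ e) (insert e T)

section Helpers

variable {V : Type*} [DecidableEq V]

/-- Auxiliary: a linear path of hyperedges inside `T`, indexed by naturals. -/
def NatPath (T : Finset (Finset V)) (m : ℕ) (f : ℕ → Finset V) : Prop :=
  (∀ i < m, f i ∈ T) ∧ (∀ i j, i < j → j < m → f i ≠ f j) ∧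
  (∀ i, i + 1 < m → (f i ∩ f (i + 1)).card = 1) ∧
  (∀ i j, i + 2 ≤ j → j < m → f i ∩ f j = ∅)

lemma natpath_mono {T T' : Finset (Finset V)} {m : ℕ}
    {f : ℕ → Finset V} (h : NatPath T m f) (hTT : T ⊆ T') : NatPath T' m f :=
  ⟨fun i hi => hTT (h.1 i hi), h.2.1, h.2.2.1, h.2.2.2⟩

lemma natpath_cons {T : Finset (Finset V)} {m : ℕ}
    {f : ℕ → Finset V} (h : NatPath T m f) (hm : 1 ≤ m) {e : Finset V} {w0 : V}
    (heT : e ∉ T) (hw0e : w0 ∈ e) (hw0f : w0 ∈ f 0)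
    (hw0 : ∀ i, 0 < i → i < m → w0 ∉ f i)
    (hcap : ∀ i, i < m → e ∩ f i ⊆ {w0}) :
    NatPath (insert e T) (m + 1) (fun i => if i = 0 then e else f (i - 1)) := by
  obtain ⟨hmem, hinj, hcons, hdisj⟩ := h
  refine ⟨?_, ?_, ?_, ?_⟩
  · intro i hi
    by_cases h0 : i = 0
    · simp [h0]
    · simp only [if_neg h0]
      exact Finset.mem_insert_of_mem (hmem _ (by omega))
  · intro i j hij hj
    by_cases h0 : i = 0
    · simp only [h0, eq_self_iff_true, ite_true, if_neg (by omega : j ≠ 0)]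
      intro hq
      exact heT (hq ▸ hmem (j-1) (by omega))
    · simp only [if_neg h0, if_neg (by omega : j ≠ 0)]
      exact hinj _ _ (by omega) (by omega)
  · intro i hi
    by_cases h0 : i = 0
    · subst h0
      simp only [eq_self_iff_true, ite_true, if_neg (by norm_num : (1:ℕ) ≠ 0)]
      have : e ∩ f 0 = {w0} := by
        apply Finset.Subset.antisymm (hcap 0 (by omega))
        intro x hx
        simp only [Finset.mem_singleton] at hx
        subst hx
        exact Finset.mem_inter.mpr ⟨hw0e, hw0f⟩
      rw [show (1:ℕ) - 1 = 0 from rfl, this, Finset.card_singleton]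
    · simp only [if_neg h0, if_neg (by omega : i + 1 ≠ 0)]
      have := hcons (i-1) (by omega)
      have h1 : i + 1 - 1 = (i - 1) + 1 := by omega
      rw [h1]
      exact this
  · intro i j hij hj
    by_cases h0 : i = 0
    · subst h0
      simp only [eq_self_iff_true, ite_true, if_neg (by omega : j ≠ 0)]
      apply Finset.eq_empty_iff_forall_notMem.mpr
      intro x hx
      have := hcap (j-1) (by omega) hx
      simp only [Finset.mem_singleton] at this
      subst this
      exact hw0 (j-1) (by omega) (by omega) (Finset.mem_inter.mp hx).2
    · simp only [if_neg h0, if_neg (by omega : j ≠ 0)]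
      exact hdisj _ _ (by omega) (by omega)

lemma natpath_snoc {T : Finset (Finset V)} {m : ℕ}
    {f : ℕ → Finset V} (h : NatPath T m f) (hm : 1 ≤ m) {e : Finset V} {w0 : V}
    (heT : e ∉ T) (hw0e : w0 ∈ e) (hw0f : w0 ∈ f (m - 1))
    (hw0 : ∀ i, i < m - 1 → w0 ∉ f i)
    (hcap : ∀ i, i < m → e ∩ f i ⊆ {w0}) :
    NatPath (insert e T) (m + 1) (fun i => if i = m then e else f i) := by
  obtain ⟨hmem, hinj, hcons, hdisj⟩ := h
  refine ⟨?_, ?_, ?_, ?_⟩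
  · intro i hi
    by_cases h0 : i = m
    · simp [h0]
    · simp only [if_neg h0]
      exact Finset.mem_insert_of_mem (hmem _ (by omega))
  · intro i j hij hj
    by_cases h0 : j = m
    · simp only [if_neg (by omega : i ≠ m), h0, eq_self_iff_true, ite_true]
      intro hq
      exact heT (hq ▸ hmem i (by omega))
    · simp only [if_neg (by omega : i ≠ m), if_neg h0]
      exact hinj _ _ (by omega) (by omega)
  · intro i hi
    by_cases h0 : i + 1 = m
    · simp only [if_neg (by omega : i ≠ m), if_pos h0]
      have : f i ∩ e = {w0} := by
        apply Finset.Subset.antisymm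
        · intro x hx
          rw [Finset.inter_comm] at hx
          exact hcap i (by omega) hx
        · intro x hx
          simp only [Finset.mem_singleton] at hx
          subst hx
          exact Finset.mem_inter.mpr ⟨by rw [show i = m - 1 by omega]; exact hw0f, hw0e⟩
      rw [this, Finset.card_singleton]
    · simp only [if_neg (by omega : i ≠ m), if_neg h0]
      exact hcons i (by omega)
  · intro i j hij hj
    by_cases h0 : j = m
    · simp only [if_neg (by omega : i ≠ m), h0, eq_self_iff_true, ite_true]
      apply Finset.eq_empty_iff_forall_notMem.mpr
      intro x hx
      rw [Finset.inter_comm] at hx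
      have := hcap i (by omega) hx
      simp only [Finset.mem_singleton] at this
      subst this
      exact hw0 i (by omega) (Finset.mem_inter.mp hx).2
    · simp only [if_neg (by omega : i ≠ m), if_neg h0]
      exact hdisj _ _ (by omega) (by omega)

lemma tree_edges_subset {S : Finset V} {T : Finset (Finset V)}
    (h : IsLinearTree S T) : ∀ g ∈ T, g ⊆ S := by
  induction h with
  | single v => simp
  | extend e ht hc hi ih =>
    intro g hg
    rcases Finset.mem_insert.mp hg with rfl | hg
    · exact Finset.subset_union_right
    · exact (ih g hg).trans Finset.subset_union_left

lemma tree_connect {S : Finset V} {T : Finset (Finset V)}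
    (hT : IsLinearTree S T) : ∀ v ∈ S, ∀ w ∈ S, v ≠ w →
    ∃ m f, 1 ≤ m ∧ NatPath T m f ∧ v ∈ f 0 ∧ (∀ i, 0 < i → i < m → v ∉ f i) ∧
      w ∈ f (m - 1) ∧ (∀ i, i < m - 1 → w ∉ f i) := by
  induction hT with
  | single x =>
    intro v hv w hw hvw
    simp only [Finset.mem_singleton] at hv hw
    exact absurd (hv.trans hw.symm) hvw
  | @extend S T e ht hc hi ih =>
    have hsub := tree_edges_subset ht
    obtain ⟨w0, hw0⟩ := Finset.card_eq_one.mp hi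
    have hw0e : w0 ∈ e := (Finset.mem_inter.mp (hw0 ▸ Finset.mem_singleton_self w0)).1
    have hw0S : w0 ∈ S := (Finset.mem_inter.mp (hw0 ▸ Finset.mem_singleton_self w0)).2
    have huniq : ∀ x, x ∈ e → x ∈ S → x = w0 := fun x h1 h2 =>
      Finset.mem_singleton.mp (hw0 ▸ Finset.mem_inter.mpr ⟨h1, h2⟩)
    have heT : e ∉ T := fun h => by
      have h2 := Finset.inter_eq_left.mpr (hsub e h)
      rw [h2] at hi; omega
    have hcapS : ∀ g, g ∈ T → e ∩ g ⊆ {w0} := by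
      intro g hg x hx
      obtain ⟨hx1, hx2⟩ := Finset.mem_inter.mp hx
      exact Finset.mem_singleton.mpr (huniq x hx1 (hsub g hg hx2))
    intro v hv w hw hvw
    by_cases hve : v ∈ e
    · by_cases hwe : w ∈ e
      · -- both in e : single-edge path
        refine ⟨1, fun _ => e, le_refl 1, ⟨?_, ?_, ?_, ?_⟩, hve, ?_, hwe, ?_⟩
        · intro i hi; exact Finset.mem_insert_self e T
        · intro i j hij hj; omega
        · intro i hi; omega
        · intro i j hij hj; omega
        · intro i h1 h2; omega
        · intro i h1; omega
      · -- v ∈ e, w ∉ e, so w ∈ S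
        have hwS : w ∈ S := (Finset.mem_union.mp hw).resolve_right hwe
        by_cases hvS : v ∈ S
        · obtain ⟨m, f, hm, hp, a1, a2, a3, a4⟩ := ih v hvS w hwS hvw
          exact ⟨m, f, hm, natpath_mono hp (Finset.subset_insert e T), a1, a2, a3, a4⟩
        · have hwne : w0 ≠ w := fun h => hwe (h ▸ hw0e)
          obtain ⟨m, f, hm, hp, a1, a2, a3, a4⟩ := ih w0 hw0S w hwS hwne
          have hcap : ∀ i, i < m → e ∩ f i ⊆ {w0} := fun i hi => hcapS _ (hp.1 i hi)
          refine ⟨m + 1, _, by omega, natpath_cons hp hm heT hw0e a1 a2 hcap, ?_, ?_, ?_, ?_⟩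
          · simp [hve]
          · intro i h1 h2
            simp only [if_neg (by omega : i ≠ 0)]
            exact fun hx => hvS (hsub _ (hp.1 (i-1) (by omega)) hx)
          · simp only [Nat.add_sub_cancel, if_neg (by omega : m ≠ 0)]
            exact a3
          · intro i h1
            by_cases h0 : i = 0
            · simpa [h0] using hwe
            · simp only [if_neg h0]
              exact a4 (i-1) (by omega)
    · -- v ∉ e, so v ∈ S
      have hvS : v ∈ S := (Finset.mem_union.mp hv).resolve_right hve
      by_cases hwe : w ∈ e
      · by_cases hwS : w ∈ S
        · obtain ⟨m, f, hm, hp, a1, a2, a3, a4⟩ := ih v hvS w hwS hvw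
          exact ⟨m, f, hm, natpath_mono hp (Finset.subset_insert e T), a1, a2, a3, a4⟩
        · have hvne : v ≠ w0 := fun h => hve (h ▸ hw0e)
          obtain ⟨m, f, hm, hp, a1, a2, a3, a4⟩ := ih v hvS w0 hw0S hvne
          have hcap : ∀ i, i < m → e ∩ f i ⊆ {w0} := fun i hi => hcapS _ (hp.1 i hi)
          refine ⟨m + 1, _, by omega, natpath_snoc hp hm heT hw0e a3 a4 hcap, ?_, ?_, ?_, ?_⟩
          · simp only [if_neg (by omega : 0 ≠ m)]
            exact a1
          · intro i h1 h2
            by_cases h0 : i = m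
            · simpa [h0] using hve
            · simp only [if_neg h0]
              exact a2 i h1 (by omega)
          · simp only [Nat.add_sub_cancel, eq_self_iff_true, ite_true]
            exact hwe
          · intro i h1
            simp only [Nat.add_sub_cancel] at h1
            simp only [if_neg (by omega : i ≠ m)]
            exact fun hx => hwS (hsub _ (hp.1 i (by omega)) hx)
      · have hwS : w ∈ S := (Finset.mem_union.mp hw).resolve_right hwe
        obtain ⟨m, f, hm, hp, a1, a2, a3, a4⟩ := ih v hvS w hwS hvw
        exact ⟨m, f, hm, natpath_mono hp (Finset.subset_insert e T), a1, a2, a3, a4⟩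

lemma tree_path_to_edge {S : Finset V} {T : Finset (Finset V)}
    (hT : IsLinearTree S T) : ∀ e ∈ T, ∀ v ∈ S,
    ∃ m f, 1 ≤ m ∧ NatPath T m f ∧ v ∈ f 0 ∧ (∀ i, 0 < i → i < m → v ∉ f i) ∧
      f (m - 1) = e := by
  induction hT with
  | single x => intro e he; exact absurd he (Finset.notMem_empty e)
  | @extend S T e' ht hc hi ih =>
    have hsub := tree_edges_subset ht
    obtain ⟨w0, hw0⟩ := Finset.card_eq_one.mp hi
    have hw0e : w0 ∈ e' := (Finset.mem_inter.mp (hw0 ▸ Finset.mem_singleton_self w0)).1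
    have hw0S : w0 ∈ S := (Finset.mem_inter.mp (hw0 ▸ Finset.mem_singleton_self w0)).2
    have huniq : ∀ x, x ∈ e' → x ∈ S → x = w0 := fun x h1 h2 =>
      Finset.mem_singleton.mp (hw0 ▸ Finset.mem_inter.mpr ⟨h1, h2⟩)
    have heT : e' ∉ T := fun h => by
      have h2 := Finset.inter_eq_left.mpr (hsub e' h)
      rw [h2] at hi; omega
    have hcapS : ∀ g, g ∈ T → e' ∩ g ⊆ {w0} := by
      intro g hg x hx
      obtain ⟨hx1, hx2⟩ := Finset.mem_inter.mp hx
      exact Finset.mem_singleton.mpr (huniq x hx1 (hsub g hg hx2))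
    intro e he v hv
    rcases Finset.mem_insert.mp he with rfl | heT'
    · -- e = e'
      by_cases hve : v ∈ e
      · refine ⟨1, fun _ => e, le_refl 1, ⟨?_, ?_, ?_, ?_⟩, hve, ?_, rfl⟩
        · intro i hi; exact Finset.mem_insert_self e T
        · intro i j hij hj; omega
        · intro i hi; omega
        · intro i j hij hj; omega
        · intro i h1 h2; omega
      · have hvS : v ∈ S := (Finset.mem_union.mp hv).resolve_right hve
        have hvne : v ≠ w0 := fun h => hve (h ▸ hw0e)
        obtain ⟨m, f, hm, hp, a1, a2, a3, a4⟩ := tree_connect ht v hvS w0 hw0S hvne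
        have hcap : ∀ i, i < m → e ∩ f i ⊆ {w0} := fun i hi => hcapS _ (hp.1 i hi)
        refine ⟨m + 1, _, by omega, natpath_snoc hp hm heT hw0e a3 a4 hcap, ?_, ?_, ?_⟩
        · simp only [if_neg (by omega : 0 ≠ m)]
          exact a1
        · intro i h1 h2
          by_cases h0 : i = m
          · simpa [h0] using hve
          · simp only [if_neg h0]
            exact a2 i h1 (by omega)
        · simp [Nat.add_sub_cancel]
    · -- e ∈ T
      by_cases hvS : v ∈ S
      · obtain ⟨m, f, hm, hp, a1, a2, a3⟩ := ih e heT' v hvS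
        exact ⟨m, f, hm, natpath_mono hp (Finset.subset_insert e' T), a1, a2, a3⟩
      · have hve : v ∈ e' := (Finset.mem_union.mp hv).resolve_left hvS
        obtain ⟨m, f, hm, hp, a1, a2, a3⟩ := ih e heT' w0 hw0S
        have hcap : ∀ i, i < m → e' ∩ f i ⊆ {w0} := fun i hi => hcapS _ (hp.1 i hi)
        refine ⟨m + 1, _, by omega, natpath_cons hp hm heT hw0e a1 a2 hcap, ?_, ?_, ?_⟩
        · simp [hve]
        · intro i h1 h2
          simp only [if_neg (by omega : i ≠ 0)]
          exact fun hx => hvS (hsub _ (hp.1 (i-1) (by omega)) hx)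
        · simp only [Nat.add_sub_cancel, if_neg (by omega : m ≠ 0)]
          exact a3

end Helpers

lemma build_cycle {V : Type*} [DecidableEq V] (E : Finset (Finset V)) (m : ℕ) (hm : 3 ≤ m)
    (F : ℕ → Finset V) (u : ℕ → V)
    (hE : ∀ i < m, F i ∈ E)
    (hinj : ∀ i j, i < j → j < m → F i ≠ F j)
    (hu : ∀ i, 1 ≤ i → i < m → F (i - 1) ∩ F i = {u i})
    (hu0 : F (m - 1) ∩ F 0 = {u 0})
    (huinj : ∀ i j, i < j → j < m → u i ≠ u j)
    (hdisj : ∀ i j, i + 2 ≤ j → j < m → (i ≠ 0 ∨ j ≠ m - 1) → F i ∩ F j = ∅) :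
    HasLinearCycle E := by
  haveI : NeZero m := ⟨by omega⟩
  haveI : Fact (1 < m) := ⟨by omega⟩
  have hval : ∀ i : ZMod m, (i + 1).val = (i.val + 1) % m := by
    intro i
    rw [ZMod.val_add, ZMod.val_one]
  have hvlt : ∀ i : ZMod m, i.val < m := fun i => ZMod.val_lt i
  refine ⟨m, fun i => u i.val, fun i => F i.val, hm, ?_, ?_, ?_, ?_, ?_⟩
  · intro i j hij
    by_contra hne
    have hv : i.val ≠ j.val := fun h => hne (ZMod.val_injective m h)
    rcases lt_or_gt_of_ne hv with h | h
    · exact huinj _ _ h (hvlt j) hij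
    · exact huinj _ _ h (hvlt i) hij.symm
  · intro i j hij
    by_contra hne
    have hv : i.val ≠ j.val := fun h => hne (ZMod.val_injective m h)
    rcases lt_or_gt_of_ne hv with h | h
    · exact hinj _ _ h (hvlt j) hij
    · exact hinj _ _ h (hvlt i) hij.symm
  · intro i; exact hE _ (hvlt i)
  · intro i
    show F i.val ∩ F (i + 1).val = {u (i + 1).val}
    by_cases h0 : i.val = m - 1
    · have h1 : (i + 1).val = 0 := by
        rw [hval, h0, show m - 1 + 1 = m by omega, Nat.mod_self]
      rw [h1, h0]
      exact hu0
    · have h1 : (i + 1).val = i.val + 1 := by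
        rw [hval, Nat.mod_eq_of_lt (by have := hvlt i; omega)]
      rw [h1]
      have := hu (i.val + 1) (by omega) (by have := hvlt i; omega)
      simpa using this
  · intro i j h1 h2 h3
    have hv : i.val ≠ j.val := fun h => h1 (ZMod.val_injective m h)
    have hv2 : (i.val + 1) % m ≠ j.val := fun h => h2 (by
      apply ZMod.val_injective m
      rw [hval]; exact h)
    have hv3 : (j.val + 1) % m ≠ i.val := fun h => h3 (by
      apply ZMod.val_injective m
      rw [hval]; exact h)
    have hi := hvlt i
    have hj := hvlt j
    rcases lt_or_gt_of_ne hv with h | h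
    · -- i.val < j.val
      have hij2 : i.val + 2 ≤ j.val := by
        rcases Nat.lt_or_ge (i.val + 1) m with hh | hh
        · rw [Nat.mod_eq_of_lt hh] at hv2; omega
        · omega
      have hex : i.val ≠ 0 ∨ j.val ≠ m - 1 := by
        by_contra hc
        push_neg at hc
        rw [hc.2, show m - 1 + 1 = m by omega, Nat.mod_self] at hv3
        exact hv3 hc.1.symm
      exact hdisj _ _ hij2 hj hex
    · -- j.val < i.val
      have hij2 : j.val + 2 ≤ i.val := by
        rcases Nat.lt_or_ge (j.val + 1) m with hh | hh
        · rw [Nat.mod_eq_of_lt hh] at hv3; omega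
        · omega
      have hex : j.val ≠ 0 ∨ i.val ≠ m - 1 := by
        by_contra hc
        push_neg at hc
        rw [hc.2, show m - 1 + 1 = m by omega, Nat.mod_self] at hv2
        exact hv2 hc.1.symm
      rw [Finset.inter_comm]
      exact hdisj _ _ hij2 hi hex

/-- If a vertex `v` of a linear tree `T` is strongly associated to a hyperedge `e` of
`T`, then `v` lies in a hyperedge of `T` meeting `e`. -/
theorem strongly_assoc_in_neighbor {V : Type*} [DecidableEq V] (E : Finset (Finset V))
    (h3 : ∀ e ∈ E, e.card = 3) (hcyc : ¬ HasLinearCycle E)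
    (S : Finset V) (T : Finset (Finset V)) (hT : IsLinearTree S T) (hTE : T ⊆ E)
    (e : Finset V) (heT : e ∈ T) (v : V) (hvS : v ∈ S) (hassoc : StronglyAssoc E e v) :
    ∃ f ∈ T, v ∈ f ∧ (f ∩ e).Nonempty := by
  obtain ⟨hve, hsupp⟩ := hassoc
  obtain ⟨m, f, hm, hp, hv0, hvonly, hlast⟩ := tree_path_to_edge hT e heT v hvS
  obtain ⟨hmem, hinj, hcons, hdisj⟩ := hp
  rcases Nat.lt_or_ge m 3 with hm3 | hm3
  · -- short path : m = 1 or m = 2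
    rcases (by omega : m = 1 ∨ m = 2) with rfl | rfl
    · exact absurd (by simpa [hlast] using hv0 : v ∈ e) hve
    · refine ⟨f 0, hmem 0 (by omega), hv0, ?_⟩
      rw [show (2:ℕ) - 1 = 1 from rfl] at hlast
      rw [← hlast]
      have := hcons 0 (by omega)
      norm_num at this
      exact Finset.card_pos.mp (by omega)
  · -- long path : build a linear cycle, contradiction
    exfalso
    apply hcyc
    have ecard : e.card = 3 := h3 e (hTE heT)
    -- two support pairs
    obtain ⟨p1, hp1, p2, hp2, hpne⟩ := Finset.one_lt_card.mp hsupp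
    rw [hSupport, Finset.mem_filter, Finset.mem_powersetCard] at hp1 hp2
    -- the connecting vertex w of f (m-2) and e
    have hcw := hcons (m - 2) (by omega)
    rw [show m - 2 + 1 = m - 1 by omega] at hcw
    obtain ⟨w, hw⟩ := Finset.card_eq_one.mp hcw
    have hwf : w ∈ f (m - 2) := (Finset.mem_inter.mp (hw ▸ Finset.mem_singleton_self w)).1
    have hwe : w ∈ e := by
      have := (Finset.mem_inter.mp (hw ▸ Finset.mem_singleton_self w)).2
      rwa [hlast] at this
    -- choose a support pair containing w
    have hpair : ∃ p, p ⊆ e ∧ p.card = 2 ∧ insert v p ∈ E ∧ w ∈ p := by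
      by_cases h1 : w ∈ p1
      · exact ⟨p1, hp1.1.1, hp1.1.2, hp1.2, h1⟩
      by_cases h2 : w ∈ p2
      · exact ⟨p2, hp2.1.1, hp2.1.2, hp2.2, h2⟩
      exfalso
      have hec : (e.erase w).card = 2 := by rw [Finset.card_erase_of_mem hwe, ecard]
      have hs1 : p1 ⊆ e.erase w := fun x hx =>
        Finset.mem_erase.mpr ⟨fun h => h1 (h ▸ hx), hp1.1.1 hx⟩
      have hs2 : p2 ⊆ e.erase w := fun x hx =>
        Finset.mem_erase.mpr ⟨fun h => h2 (h ▸ hx), hp2.1.1 hx⟩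
      have e1 : p1 = e.erase w := Finset.eq_of_subset_of_card_le hs1 (by omega)
      have e2 : p2 = e.erase w := Finset.eq_of_subset_of_card_le hs2 (by omega)
      exact hpne (e1.trans e2.symm)
    obtain ⟨p, hpsub, hpcard, hpE, hwp⟩ := hpair
    set g : Finset V := insert v p with hg
    have hvg : v ∈ g := Finset.mem_insert_self v p
    have hwg : w ∈ g := Finset.mem_insert_of_mem hwp
    -- disjointness of path edges with e
    have hfe : ∀ i, i + 2 ≤ m - 1 → f i ∩ e = ∅ := by
      intro i hi
      rw [← hlast]
      exact hdisj i (m-1) hi (by omega)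
    -- key facts about g
    have hg0 : g ∩ f 0 = {v} := by
      ext x
      simp only [hg, Finset.mem_inter, Finset.mem_insert, Finset.mem_singleton]
      constructor
      · rintro ⟨hx1 | hx1, hx2⟩
        · exact hx1
        · exfalso
          have : x ∈ f 0 ∩ e := Finset.mem_inter.mpr ⟨hx2, hpsub hx1⟩
          rw [hfe 0 (by omega)] at this
          exact Finset.notMem_empty x this
      · rintro rfl; exact ⟨Or.inl rfl, hv0⟩
    have hgm2 : f (m - 2) ∩ g = {w} := by
      ext x
      simp only [hg, Finset.mem_inter, Finset.mem_insert, Finset.mem_singleton]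
      constructor
      · rintro ⟨hx1, hx2 | hx2⟩
        · exact absurd (hx2 ▸ hx1) (hvonly (m-2) (by omega) (by omega))
        · have : x ∈ f (m-2) ∩ f (m-1) := Finset.mem_inter.mpr ⟨hx1, by rw [hlast]; exact hpsub hx2⟩
          rw [hw] at this
          exact Finset.mem_singleton.mp this
      · rintro rfl; exact ⟨hwf, Or.inr hwp⟩
    have hgd : ∀ i, 1 ≤ i → i + 2 ≤ m - 1 → f i ∩ g = ∅ := by
      intro i h1 h2
      apply Finset.eq_empty_iff_forall_notMem.mpr
      intro x hx
      obtain ⟨hx1, hx2⟩ := Finset.mem_inter.mp hx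
      rcases Finset.mem_insert.mp hx2 with rfl | hx2
      · exact hvonly i h1 (by omega) hx1
      · have : x ∈ f i ∩ e := Finset.mem_inter.mpr ⟨hx1, hpsub hx2⟩
        rw [hfe i h2] at this
        exact Finset.notMem_empty x this
    have hgne : ∀ i, i < m - 1 → f i ≠ g := by
      intro i hi hq
      by_cases h0 : i = 0
      · subst h0
        have : w ∈ f 0 ∩ e := Finset.mem_inter.mpr ⟨hq ▸ hwg, hwe⟩
        rw [hfe 0 (by omega)] at this
        exact Finset.notMem_empty w this
      · exact hvonly i (by omega) (by omega) (hq ▸ hvg)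
    -- middle intersection vertices
    have hmidc : ∀ i : ℕ, ∃ a, 1 ≤ i → i ≤ m - 2 → f (i - 1) ∩ f i = {a} := by
      intro i
      by_cases hic : 1 ≤ i ∧ i ≤ m - 2
      · have := hcons (i - 1) (by omega)
        rw [show i - 1 + 1 = i by omega] at this
        obtain ⟨a, ha⟩ := Finset.card_eq_one.mp this
        exact ⟨a, fun _ _ => ha⟩
      · exact ⟨v, fun h1 h2 => absurd ⟨h1, h2⟩ hic⟩
    choose c hc using hmidc
    have hcmem : ∀ i, 1 ≤ i → i ≤ m - 2 → c i ∈ f (i - 1) ∩ f i := by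
      intro i h1 h2
      rw [hc i h1 h2]
      exact Finset.mem_singleton_self _
    -- the cycle
    set F : ℕ → Finset V := fun i => if i = m - 1 then g else f i with hF
    set u : ℕ → V := fun i => if i = 0 then v else if i = m - 1 then w else c i with hu
    apply build_cycle E m hm3 F u
    · intro i hi
      by_cases h0 : i = m - 1
      · simp only [hF, h0, eq_self_iff_true, ite_true]; exact hpE
      · simp only [hF, if_neg h0]; exact hTE (hmem i hi)
    · intro i j hij hj
      by_cases h0 : j = m - 1
      · subst h0
        simp only [hF, eq_self_iff_true, ite_true, if_neg (by omega : i ≠ m - 1)]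
        exact hgne i (by omega)
      · simp only [hF, if_neg h0, if_neg (by omega : i ≠ m - 1)]
        exact hinj i j hij (by omega)
    · intro i h1 h2
      by_cases h0 : i = m - 1
      · subst h0
        simp only [hF, hu, eq_self_iff_true, ite_true, if_neg (by omega : m - 1 - 1 ≠ m - 1),
          if_neg (by omega : m - 1 ≠ 0)]
        rw [show m - 1 - 1 = m - 2 by omega]
        exact hgm2
      · simp only [hF, hu, if_neg h0, if_neg (by omega : i - 1 ≠ m - 1), if_neg (by omega : i ≠ 0)]
        exact hc i h1 (by omega)
    · simp only [hF, hu, eq_self_iff_true, ite_true, if_neg (by omega : (0:ℕ) ≠ m - 1)]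
      exact hg0
    · intro i j hij hj
      by_cases h0 : i = 0
      · subst h0
        simp only [hu, eq_self_iff_true, ite_true, if_neg (by omega : j ≠ 0)]
        by_cases hjm : j = m - 1
        · simp only [hjm, eq_self_iff_true, ite_true]
          exact fun h => hve (h ▸ hwe)
        · simp only [if_neg hjm]
          intro h
          exact hvonly j (by omega) (by omega)
            (h ▸ (Finset.mem_inter.mp (hcmem j (by omega) (by omega))).2)
      · simp only [hu, if_neg h0, if_neg (by omega : j ≠ 0)]
        by_cases hjm : j = m - 1
        · simp only [hjm, eq_self_iff_true, ite_true, if_neg (by omega : i ≠ m - 1)]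
          intro h
          have hci : c i ∈ f (i - 1) := (Finset.mem_inter.mp (hcmem i (by omega) (by omega))).1
          have : c i ∈ f (i - 1) ∩ e := Finset.mem_inter.mpr ⟨hci, h ▸ hwe⟩
          rw [hfe (i - 1) (by omega)] at this
          exact Finset.notMem_empty _ this
        · simp only [if_neg hjm, if_neg (by omega : i ≠ m - 1)]
          intro h
          have hci : c i ∈ f (i - 1) := (Finset.mem_inter.mp (hcmem i (by omega) (by omega))).1
          have hcj : c j ∈ f j := (Finset.mem_inter.mp (hcmem j (by omega) (by omega))).2
          have : c i ∈ f (i - 1) ∩ f j := Finset.mem_inter.mpr ⟨hci, h ▸ hcj⟩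
          rw [hdisj (i - 1) j (by omega) (by omega)] at this
          exact Finset.notMem_empty _ this
    · intro i j hij hj hex
      by_cases h0 : j = m - 1
      · subst h0
        have hi0 : i ≠ 0 := hex.resolve_right (fun h => h rfl)
        simp only [hF, eq_self_iff_true, ite_true, if_neg (by omega : i ≠ m - 1)]
        exact hgd i (by omega) hij
      · simp only [hF, if_neg h0, if_neg (by omega : i ≠ m - 1)]
        exact hdisj i j hij (by omega)
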